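/- Let (a_n) be a real null sequence not in ℓ^1, let L ∈ R and k ≥ 2. Define s_j(ε) = ∑_{n=1}^{jk} ε_n a_n, and for each j let m(j) ∈ {jk+1,...,(j+1)k} be an index maximizing |a_n| on that block. Let Λ = {ε ∈ {-1,1}^N : for all j ≥ 0, (s_j − L)(s_{j+1} − s_j) ≤ 0 and |s_{j+1} − s_j| ≥ |a_{m(j)}|}. Then every ε ∈ Λ satisfies ∑_{n=1}^∞ ε_n a_n = L. -/

import Mathlib

open Filter Finset

/-- Key sign lemma: a step opposing the deviation either crosses `L` (and then the new
deviation is at most the step size), or decreases the deviation by at least `c`. -/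
lemma stmt18_key (x y c : ℝ) (hxy : x * y ≤ 0) (hc : c ≤ |y|) :
    (x * (x + y) ≤ 0 ∧ |x + y| ≤ |y|) ∨ |x + y| ≤ |x| - c := by
  rcases le_or_gt 0 x with hx | hx
  · rcases le_or_gt (x + y) 0 with hxy2 | hxy2
    · left
      refine ⟨mul_nonpos_of_nonneg_of_nonpos hx hxy2, ?_⟩
      have hy : y ≤ 0 := by nlinarith
      rw [abs_of_nonpos hxy2, abs_of_nonpos hy]; linarith
    · rcases le_or_gt y 0 with hy | hy
      · right
        rw [abs_of_pos hxy2, abs_of_nonneg hx]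
        rw [abs_of_nonpos hy] at hc
        linarith
      · -- y > 0, so x ≤ 0, hence x = 0
        have hx0 : x = 0 := le_antisymm (by nlinarith) hx
        left
        subst hx0
        simp
  · rcases le_or_gt 0 (x + y) with hxy2 | hxy2
    · left
      refine ⟨mul_nonpos_of_nonpos_of_nonneg hx.le hxy2, ?_⟩
      have hy : 0 ≤ y := by nlinarith
      rw [abs_of_nonneg hxy2, abs_of_nonneg hy]; linarith
    · right
      have hy : 0 ≤ y := by nlinarith
      rw [abs_of_neg hxy2, abs_of_neg hx]
      rw [abs_of_nonneg hy] at hc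
      linarith

theorem stmt18 (a : ℕ → ℝ) (h0 : Tendsto a atTop (nhds 0))
    (h1 : ¬ Summable (fun n => |a n|)) (L : ℝ) (k : ℕ) (hk : 2 ≤ k)
    (m : ℕ → ℕ) (hm : ∀ j, m j ∈ Finset.Ico (j * k) ((j + 1) * k))
    (hmax : ∀ j, ∀ n ∈ Finset.Ico (j * k) ((j + 1) * k), |a n| ≤ |a (m j)|)
    (ε : ℕ → ℝ) (hε : ∀ n, ε n = 1 ∨ ε n = -1)
    (hΛ : ∀ j : ℕ,
      ((∑ n ∈ Finset.range (j * k), ε n * a n) - L) *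
          ((∑ n ∈ Finset.range ((j + 1) * k), ε n * a n) -
            ∑ n ∈ Finset.range (j * k), ε n * a n) ≤ 0 ∧
      |a (m j)| ≤
        |(∑ n ∈ Finset.range ((j + 1) * k), ε n * a n) -
          ∑ n ∈ Finset.range (j * k), ε n * a n|) :
    Tendsto (fun N => ∑ n ∈ Finset.range N, ε n * a n) atTop (nhds L) := by
  have hk0 : 0 < k := by omega
  set s : ℕ → ℝ := fun j => ∑ n ∈ Finset.range (j * k), ε n * a n with hs
  set d : ℕ → ℝ := fun j => |s j - L| with hd
  set c : ℕ → ℝ := fun j => |a (m j)| with hc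
  set B : ℕ → ℝ := fun j => ∑ n ∈ Finset.Ico (j * k) ((j + 1) * k), |a n| with hB
  have habs : ∀ n, |ε n * a n| = |a n| := by
    intro n
    rcases hε n with h | h <;> rw [abs_mul, h] <;> simp
  have hmono : ∀ j, j * k ≤ (j + 1) * k := fun j => by
    apply Nat.mul_le_mul_right; omega
  have hstep : ∀ j, s (j + 1) - s j = ∑ n ∈ Finset.Ico (j * k) ((j + 1) * k), ε n * a n := by
    intro j
    have h := Finset.sum_range_add_sum_Ico (fun n => ε n * a n) (hmono j)
    simp only [hs]
    linarith [h]
  have hstepB : ∀ j, |s (j + 1) - s j| ≤ B j := by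
    intro j
    rw [hstep j, hB]
    refine le_trans (Finset.abs_sum_le_sum_abs _ _) ?_
    exact le_of_eq (Finset.sum_congr rfl fun n _ => habs n)
  have hB0 : ∀ j, 0 ≤ B j := fun j => Finset.sum_nonneg fun n _ => abs_nonneg _
  have hc0 : ∀ j, 0 ≤ c j := fun j => abs_nonneg _
  have hBk : ∀ j, B j ≤ k * c j := by
    intro j
    rw [hB]
    calc ∑ n ∈ Finset.Ico (j * k) ((j + 1) * k), |a n|
        ≤ ∑ _n ∈ Finset.Ico (j * k) ((j + 1) * k), c j :=
          Finset.sum_le_sum fun n hn => hmax j n hn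
      _ = ((j + 1) * k - j * k : ℕ) * c j := by rw [Finset.sum_const, Nat.card_Ico]; simp
      _ = k * c j := by congr 1; push_cast; ring_nf; congr 1; omega
  -- c is not summable
  have hcns : ¬ Summable c := by
    intro hsum
    apply h1
    have hBsum : Summable B := by
      apply Summable.of_nonneg_of_le hB0 hBk
      exact hsum.mul_left _
    have hBsumEq : ∀ N, ∑ j ∈ Finset.range N, B j = ∑ n ∈ Finset.range (N * k), |a n| := by
      intro N
      induction N with
      | zero => simp
      | succ N ih =>
        rw [Finset.sum_range_succ, ih, hB]
        exact Finset.sum_range_add_sum_Ico _ (hmono N)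
    apply summable_of_sum_range_le (fun n => abs_nonneg _) (c := ∑' j, B j)
    intro N
    calc ∑ n ∈ Finset.range N, |a n|
        ≤ ∑ n ∈ Finset.range (N * k), |a n| := by
          apply Finset.sum_le_sum_of_subset_of_nonneg
          · exact Finset.range_subset_range.mpr (Nat.le_mul_of_pos_right N hk0)
          · intro n _ _; exact abs_nonneg _
      _ = ∑ j ∈ Finset.range N, B j := (hBsumEq N).symm
      _ ≤ ∑' j, B j := Summable.sum_le_tsum _ (fun n _ => hB0 n) hBsum
  -- c tends to 0
  have hmtop : Tendsto m atTop atTop :=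
    tendsto_atTop_mono (fun j => le_trans (Nat.le_mul_of_pos_right j hk0)
      (Finset.mem_Ico.mp (hm j)).1) tendsto_id
  have hctend : Tendsto c atTop (nhds 0) := by
    have := (h0.comp hmtop).abs
    simpa [hc, Function.comp] using this
  have hBtend : Tendsto B atTop (nhds 0) := by
    have hkc : Tendsto (fun j => (k : ℝ) * c j) atTop (nhds 0) := by
      simpa using hctend.const_mul (k : ℝ)
    exact squeeze_zero hB0 hBk hkc
  -- the dichotomy at each step
  have hdich : ∀ j, ((s j - L) * (s (j + 1) - L) ≤ 0 ∧ d (j + 1) ≤ B j) ∨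
      d (j + 1) ≤ d j - c j := by
    intro j
    obtain ⟨hΛ1, hΛ2⟩ := hΛ j
    have hkey := stmt18_key (s j - L) (s (j + 1) - s j) (c j) (by exact hΛ1) hΛ2
    have hxy : s j - L + (s (j + 1) - s j) = s (j + 1) - L := by ring
    rcases hkey with ⟨hcr, hle⟩ | hle
    · left
      constructor
      · have : (s j - L) * (s j - L + (s (j + 1) - s j)) ≤ 0 := hcr
        rwa [hxy] at this
      · show |s (j + 1) - L| ≤ B j
        rw [← hxy]
        exact le_trans hle (hstepB j)
    · right
      show |s (j + 1) - L| ≤ |s j - L| - c j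
      rw [← hxy]
      exact hle
  -- crossings happen beyond any point
  have hcross : ∀ J, ∃ j, J ≤ j ∧ d (j + 1) ≤ B j := by
    intro J
    by_contra hno
    push_neg at hno
    have hdec : ∀ j, J ≤ j → d (j + 1) ≤ d j - c j := by
      intro j hj
      rcases hdich j with ⟨_, hle⟩ | hle
      · exact absurd hle (not_le.mpr (hno j hj))
      · exact hle
    have hsumle : ∀ N, ∑ i ∈ Finset.range N, c (i + J) ≤ d J - d (J + N) := by
      intro N
      induction N with
      | zero => simp
      | succ N ih =>
        rw [Finset.sum_range_succ]
        have h2 := hdec (J + N) (Nat.le_add_right J N)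
        have : J + N + 1 = J + (N + 1) := by omega
        rw [this] at h2
        have hcomm : N + J = J + N := by omega
        rw [hcomm]
        linarith
    have hcsum : Summable (fun i => c (i + J)) := by
      apply summable_of_sum_range_le (fun n => hc0 _) (c := d J)
      intro N
      have := hsumle N
      have hdnn : 0 ≤ d (J + N) := abs_nonneg _
      linarith
    exact hcns ((summable_nat_add_iff J).mp hcsum)
  -- conclusion
  rw [Metric.tendsto_atTop]
  intro δ hδ
  have hδ3 : 0 < δ / 3 := by linarith
  obtain ⟨J1, hJ1⟩ := (Metric.tendsto_atTop.mp hBtend) (δ / 3) hδ3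
  obtain ⟨j0, hj0J, hj0⟩ := hcross J1
  have hBlt : ∀ j, J1 ≤ j → B j < δ / 3 := by
    intro j hj
    have := hJ1 j hj
    rwa [Real.dist_eq, abs_of_nonneg (by linarith [hB0 j] : (0:ℝ) ≤ B j - 0), sub_zero] at this
  have hdlt : ∀ j, j0 + 1 ≤ j → d j < δ / 3 := by
    intro j hj
    induction j, hj using Nat.le_induction with
    | base => exact lt_of_le_of_lt hj0 (hBlt j0 hj0J)
    | succ j hj ih =>
      rcases hdich j with ⟨_, hle⟩ | hle
      · exact lt_of_le_of_lt hle (hBlt j (by omega))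
      · have := hc0 j
        linarith
  refine ⟨(j0 + 1) * k, fun N hN => ?_⟩
  set j := N / k with hj
  have hdiv : j * k ≤ N := Nat.div_mul_le_self N k
  have hmod : N < (j + 1) * k := by
    have h1 := Nat.div_add_mod N k
    have h2 : N % k < k := Nat.mod_lt _ hk0
    have h3 : j * k = k * (N / k) := by rw [hj]; ring
    have h4 : (j + 1) * k = j * k + k := by ring
    rw [h4, h3]
    omega
  have hjge : j0 + 1 ≤ j := by
    rw [hj]
    exact (Nat.le_div_iff_mul_le hk0).mpr hN
  have htail : |(∑ n ∈ Finset.range N, ε n * a n) - s j| ≤ B j := by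
    rw [hs]
    rw [← Finset.sum_range_add_sum_Ico (fun n => ε n * a n) hdiv]
    simp only [add_sub_cancel_left]
    refine le_trans (Finset.abs_sum_le_sum_abs _ _) ?_
    calc ∑ n ∈ Finset.Ico (j * k) N, |ε n * a n|
        = ∑ n ∈ Finset.Ico (j * k) N, |a n| :=
          Finset.sum_congr rfl fun n _ => habs n
      _ ≤ B j := by
          apply Finset.sum_le_sum_of_subset_of_nonneg
          · exact Finset.Ico_subset_Ico le_rfl hmod.le
          · intro n _ _; exact abs_nonneg _
  have hBj : B j < δ / 3 := hBlt j (by omega)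
  have hdj : d j < δ / 3 := hdlt j hjge
  rw [Real.dist_eq]
  have : |(∑ n ∈ Finset.range N, ε n * a n) - L| ≤
      |(∑ n ∈ Finset.range N, ε n * a n) - s j| + |s j - L| := by
    have := abs_sub_le (∑ n ∈ Finset.range N, ε n * a n) (s j) L
    exact this
  calc |(∑ n ∈ Finset.range N, ε n * a n) - L|
      ≤ |(∑ n ∈ Finset.range N, ε n * a n) - s j| + |s j - L| := this
    _ ≤ B j + d j := add_le_add htail (le_refl _)
    _ < δ / 3 + δ / 3 := by exact add_lt_add hBj hdj
    _ < δ := by linarith
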